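/- For every positive integer k and nonnegative integer n, $B_{n,\lambda}^{(c,-k)}(x,y)=\sum_{j=0}^{n}\sum_{m=0}^{\lfloor j/2\rfloor}\frac{\binom{n}{j}}{\binom{n-j+k}{k}}T_\lambda(n-j+k,k\mid x)(-1)^m y^{2m}\lambda^{j-2m}S_1(j,2m)$. -/

import Mathlib

open PowerSeries Finset Complex

/-- The degenerate falling factorial `(x)_{n,λ} = x(x-λ)⋯(x-(n-1)λ)`. -/
noncomputable def dff (l x : ℂ) (n : ℕ) : ℂ := ∏ j ∈ Finset.range n, (x - j * l)

/-- Exponential generating function of a sequence: `Σ f n * t^n / n!`. -/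
noncomputable def egf (f : ℕ → ℂ) : PowerSeries ℂ := PowerSeries.mk fun n => f n / n.factorial

/-- The degenerate exponential `e_λ^x(t) = (1+λt)^{x/λ} = Σ (x)_{n,λ} t^n/n!` as a power series. -/
noncomputable def degExp (l x : ℂ) : PowerSeries ℂ := egf (dff l x)

/-- The degenerate cosine `cos_λ^{(y)}(t) = cos((y/λ) log(1+λt)) = (e_λ^{iy}(t)+e_λ^{-iy}(t))/2`. -/
noncomputable def degCos (l y : ℂ) : PowerSeries ℂ :=
  PowerSeries.C (R := ℂ) (1/2) * (degExp l (Complex.I * y) + degExp l (-(Complex.I * y)))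

/-- The degenerate sine `sin_λ^{(y)}(t) = sin((y/λ) log(1+λt)) = (e_λ^{iy}(t)-e_λ^{-iy}(t))/(2i)`. -/
noncomputable def degSin (l y : ℂ) : PowerSeries ℂ :=
  PowerSeries.C (R := ℂ) (1/(2*Complex.I)) * (degExp l (Complex.I * y) - degExp l (-(Complex.I * y)))

/-- The exponential series `e^{at} = Σ a^n t^n/n!`. -/
noncomputable def expS (a : ℂ) : PowerSeries ℂ := egf (fun n => a ^ n)

/-- The series of `log(1+t)`. -/
noncomputable def logS : PowerSeries ℂ := PowerSeries.mk fun n => if n = 0 then 0 else (-1)^(n+1) / n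

namespace Stmt12Aux

lemma coeff_egf (f : ℕ → ℂ) (i : ℕ) : PowerSeries.coeff (R := ℂ) i (egf f) = f i / i.factorial :=
  PowerSeries.coeff_mk _ _

lemma factc_ne (m : ℕ) : ((m.factorial : ℂ)) ≠ 0 :=
  Nat.cast_ne_zero.mpr (Nat.factorial_ne_zero m)

lemma natc_ne' (m : ℕ) : ((m:ℂ)+1) ≠ 0 := by
  have : (((m+1:ℕ)):ℂ) ≠ 0 := Nat.cast_ne_zero.mpr (Nat.succ_ne_zero m)
  push_cast at this; exact this

lemma constCoeff_logS : PowerSeries.constantCoeff (R := ℂ) logS = 0 := by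
  simp [logS, ← PowerSeries.coeff_zero_eq_constantCoeff]

lemma constCoeff_degExp (l a : ℂ) : PowerSeries.constantCoeff (R := ℂ) (degExp l a) = 1 := by
  rw [← PowerSeries.coeff_zero_eq_constantCoeff]
  rw [degExp, coeff_egf]
  simp [dff]

lemma one_add_X_mul_d_logS : (1 + PowerSeries.X) * (PowerSeries.derivative ℂ logS) = 1 := by
  ext n
  rw [add_mul, one_mul, map_add]
  cases n with
  | zero =>
    rw [PowerSeries.coeff_zero_eq_constantCoeff, map_mul, PowerSeries.constantCoeff_X, zero_mul,
      ← PowerSeries.coeff_zero_eq_constantCoeff]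
    simp [PowerSeries.coeff_derivative, logS]
  | succ m =>
    rw [PowerSeries.coeff_succ_X_mul, PowerSeries.coeff_derivative, PowerSeries.coeff_derivative,
      logS, PowerSeries.coeff_mk, PowerSeries.coeff_mk]
    have h1 : ((m:ℂ)+1) ≠ 0 := natc_ne' m
    have h2 : ((m:ℂ)+1+1) ≠ 0 := by intro h; exact natc_ne' (m+1) (by push_cast; linear_combination h)
    simp only [Nat.succ_ne_zero, if_false, PowerSeries.coeff_one, Nat.succ_ne_zero]
    push_cast
    field_simp
    ring

lemma coeff_X_mul_d (f : PowerSeries ℂ) (i : ℕ) :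
    PowerSeries.coeff (R := ℂ) i (PowerSeries.X * PowerSeries.derivative ℂ f) =
      PowerSeries.coeff (R := ℂ) i f * i := by
  cases i with
  | zero =>
    rw [PowerSeries.coeff_zero_eq_constantCoeff, map_mul, PowerSeries.constantCoeff_X, zero_mul]
    simp
  | succ m =>
    rw [PowerSeries.coeff_succ_X_mul, PowerSeries.coeff_derivative]
    push_cast; ring

section
variable (S1 : ℕ → ℕ → ℂ)
  (hS1 : ∀ j, logS ^ j = PowerSeries.C (R := ℂ) (Nat.factorial j) * egf (fun i => S1 i j))

include hS1

lemma hS1coeff : ∀ i j, PowerSeries.coeff (R := ℂ) i (logS ^ j) = (j.factorial : ℂ) * (S1 i j / i.factorial) := by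
  intro i j
  rw [hS1 j, PowerSeries.coeff_C_mul, coeff_egf]

lemma hS100 : S1 0 0 = 1 := by
  have := hS1coeff S1 hS1 0 0
  simp at this
  linear_combination -this

lemma hS1i0 (i : ℕ) (hi : 0 < i) : S1 i 0 = 0 := by
  have h := hS1coeff S1 hS1 i 0
  rw [pow_zero, PowerSeries.coeff_one, if_neg (Nat.pos_iff_ne_zero.mp hi)] at h
  have hi' := factc_ne i
  field_simp at h
  simpa using h.symm

lemma hS1lt (i j : ℕ) (hij : i < j) : S1 i j = 0 := by
  have hdvd : (PowerSeries.X : PowerSeries ℂ) ^ j ∣ logS ^ j :=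
    pow_dvd_pow_of_dvd (PowerSeries.X_dvd_iff.mpr constCoeff_logS) j
  have hz : PowerSeries.coeff (R := ℂ) i (logS ^ j) = 0 := PowerSeries.X_pow_dvd_iff.mp hdvd i hij
  rw [hS1coeff S1 hS1] at hz
  have h1 := factc_ne j
  have h2 := factc_ne i
  field_simp at hz
  rcases mul_eq_zero.mp (hz.trans (mul_zero _)) with h | h
  · exact absurd h h1
  · exact h

lemma hS1rec (i j : ℕ) : S1 (i+1) (j+1) = S1 i j - i * S1 i (j+1) := by
  have hle : PowerSeries.derivative ℂ (logS ^ (j+1)) =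
      (j+1) • (logS ^ j * PowerSeries.derivative ℂ logS) := by
    have := Derivation.leibniz_pow (D := PowerSeries.derivative ℂ) (a := logS) (j+1)
    simpa [smul_eq_mul] using this
  have key : (1 + PowerSeries.X) * PowerSeries.derivative ℂ (logS ^ (j+1)) =
      PowerSeries.C (R := ℂ) ((j+1 : ℕ) : ℂ) * logS ^ j := by
    rw [hle, nsmul_eq_mul]
    have hn : ((j+1 : ℕ) : PowerSeries ℂ) = PowerSeries.C (R := ℂ) ((j+1 : ℕ) : ℂ) :=
      (map_natCast (PowerSeries.C (R := ℂ)) (j+1)).symm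
    rw [hn]
    calc (1 + PowerSeries.X) * (PowerSeries.C (R := ℂ) ((j+1 : ℕ) : ℂ) * (logS ^ j * PowerSeries.derivative ℂ logS))
        = PowerSeries.C (R := ℂ) ((j+1 : ℕ) : ℂ) * (logS ^ j * ((1 + PowerSeries.X) * PowerSeries.derivative ℂ logS)) := by ring
      _ = PowerSeries.C (R := ℂ) ((j+1 : ℕ) : ℂ) * (logS ^ j * 1) := by rw [one_add_X_mul_d_logS]
      _ = PowerSeries.C (R := ℂ) ((j+1 : ℕ) : ℂ) * logS ^ j := by ring
  have hc := congrArg (PowerSeries.coeff (R := ℂ) i) key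
  rw [add_mul, one_mul, map_add, coeff_X_mul_d, PowerSeries.coeff_derivative,
    PowerSeries.coeff_C_mul, hS1coeff S1 hS1, hS1coeff S1 hS1, hS1coeff S1 hS1] at hc
  have e1 : ((i+1).factorial : ℂ) = ((i:ℂ)+1) * i.factorial := by
    rw [Nat.factorial_succ]; push_cast; ring
  have e2 : ((j+1).factorial : ℂ) = ((j:ℂ)+1) * j.factorial := by
    rw [Nat.factorial_succ]; push_cast; ring
  rw [e1, e2] at hc
  have hi := factc_ne i
  have hj := factc_ne j
  have hi1 := natc_ne' i
  have hj1 := natc_ne' j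
  push_cast at hc
  field_simp at hc
  have hD : (((j:ℂ)+1) * (j.factorial:ℂ) * (((i:ℂ)+1) * (i.factorial:ℂ) * (i.factorial:ℂ))) ≠ 0 := by
    exact mul_ne_zero (mul_ne_zero hj1 hj) (mul_ne_zero (mul_ne_zero hi1 hi) hi)
  apply mul_left_cancel₀ hD
  linear_combination ((((j:ℂ)+1) * (j.factorial:ℂ) * (((i:ℂ)+1) * (i.factorial:ℂ) * (i.factorial:ℂ)))) * hc

include hS1 in
lemma dffS1 (l z : ℂ) (n : ℕ) :
    dff l z n = ∑ m ∈ Finset.range (n+1), S1 n m * l^(n-m) * z^m := by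
  have h00 := hS100 S1 hS1
  have h0 := hS1i0 S1 hS1
  have hlt := hS1lt S1 hS1
  have hrec := hS1rec S1 hS1
  induction n with
  | zero => simp [dff, h00]
  | succ n ih =>
    have hstep : dff l z (n+1) = dff l z n * (z - n * l) := Finset.prod_range_succ _ _
    rw [hstep, ih]
    rw [Finset.sum_range_succ' (fun m => S1 (n+1) m * l^(n+1-m) * z^m) (n+1)]
    have hf0 : S1 (n+1) 0 * l^(n+1-0) * z^0 = 0 := by
      rw [h0 (n+1) (Nat.succ_pos n)]; ring
    rw [hf0, add_zero]
    have hterm : ∀ i ∈ Finset.range (n+1),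
        S1 (n+1) (i+1) * l^(n+1-(i+1)) * z^(i+1)
          = S1 n i * l^(n-i) * z^(i+1) - n * (S1 n (i+1) * l^(n-i) * z^(i+1)) := by
      intro i _
      rw [hrec n i, Nat.succ_sub_succ]
      ring
    rw [Finset.sum_congr rfl hterm, Finset.sum_sub_distrib]
    have hsecond : ∑ i ∈ Finset.range (n+1), (n : ℂ) * (S1 n (i+1) * l^(n-i) * z^(i+1))
        = (n : ℂ) * l * ∑ m ∈ Finset.range (n+1), S1 n m * l^(n-m) * z^m := by
      rcases Nat.eq_zero_or_pos n with hn | hn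
      · subst hn; simp
      · rw [← Finset.mul_sum, mul_assoc]
        congr 1
        have g1 : ∑ i ∈ Finset.range (n+1), S1 n (i+1) * l^(n-i) * z^(i+1)
            = ∑ m ∈ Finset.range (n+2), S1 n m * l^(n+1-m) * z^m := by
          rw [Finset.sum_range_succ' (fun m => S1 n m * l^(n+1-m) * z^m) (n+1)]
          rw [h0 n hn]
          simp [Nat.succ_sub_succ]
        rw [g1, Finset.sum_range_succ, hlt n (n+1) (Nat.lt_succ_self n), zero_mul, zero_mul,
          add_zero, Finset.mul_sum]
        apply Finset.sum_congr rfl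
        intro m hm
        have hmn : m ≤ n := Nat.lt_succ_iff.mp (Finset.mem_range.mp hm)
        have : n + 1 - m = (n - m) + 1 := by omega
        rw [this, pow_succ]
        ring
    rw [hsecond, Finset.sum_mul]
    rw [Finset.mul_sum, ← Finset.sum_sub_distrib]
    apply Finset.sum_congr rfl
    intro m _
    rw [pow_succ]
    ring

end

lemma evenOddSum (j : ℕ) (G : ℕ → ℂ) (hodd : ∀ m, ¬ Even m → G m = 0) :
    ∑ m ∈ Finset.range (j+1), G m = ∑ m ∈ Finset.range (j/2+1), G (2*m) := by
  rw [← Finset.sum_filter_of_ne (f := G) (s := Finset.range (j+1)) (p := fun m => Even m)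
    (by intro m _ h; by_contra he; exact h (hodd m he))]
  apply Finset.sum_nbij' (i := fun m => m / 2) (j := fun m => 2 * m)
  · intro a ha
    simp only [Finset.mem_filter, Finset.mem_range] at ha
    simp only [Finset.mem_range]
    omega
  · intro a ha
    simp only [Finset.mem_range] at ha
    simp only [Finset.mem_filter, Finset.mem_range]
    constructor
    · omega
    · exact even_two_mul a
  · intro a ha
    simp only [Finset.mem_filter, Finset.mem_range] at ha
    obtain ⟨c, hc⟩ := ha.2
    omega
  · intro a _; omega
  · intro a ha
    simp only [Finset.mem_filter, Finset.mem_range] at ha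
    obtain ⟨c, hc⟩ := ha.2
    congr 1
    omega

end Stmt12Aux

open Stmt12Aux in
theorem stmt12 (lam x y : ℝ) (k : ℕ) (hk : 0 < k) (Bc T : ℕ → ℂ) (S1 : ℕ → ℕ → ℂ)
    (hBc : PowerSeries.X ^ k * egf Bc =
      (degExp lam (1/2) - degExp lam (-(1/2))) ^ k * degExp lam x * degCos lam y)
    (hT : (degExp lam (1/2) - degExp lam (-(1/2))) ^ k * degExp lam x =
      PowerSeries.C (R := ℂ) (Nat.factorial k) * egf T)
    (hS1 : ∀ j, logS ^ j = PowerSeries.C (R := ℂ) (Nat.factorial j) * egf (fun i => S1 i j))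
    (n : ℕ) :
    Bc n = ∑ j ∈ Finset.range (n+1), ∑ m ∈ Finset.range (j/2+1),
      ((n.choose j : ℂ) / ((n-j+k).choose k : ℂ)) * T (n-j+k) * (-1)^m * (y:ℂ)^(2*m) *
        (lam:ℂ)^(j-2*m) * S1 j (2*m) := by
  -- coefficient of degCos
  have hcos : ∀ j : ℕ, PowerSeries.coeff (R := ℂ) j (degCos lam y) =
      (∑ m ∈ Finset.range (j/2+1), (-1:ℂ)^m * (y:ℂ)^(2*m) * (lam:ℂ)^(j-2*m) * S1 j (2*m))
        / j.factorial := by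
    intro j
    rw [degCos, PowerSeries.coeff_C_mul, map_add, degExp, degExp, coeff_egf, coeff_egf]
    rw [dffS1 S1 hS1, dffS1 S1 hS1]
    have hcomb : (1:ℂ)/2 * (((∑ m ∈ Finset.range (j+1), S1 j m * (lam:ℂ)^(j-m) * (Complex.I*y)^m)) / j.factorial
        + (∑ m ∈ Finset.range (j+1), S1 j m * (lam:ℂ)^(j-m) * (-(Complex.I*y))^m) / j.factorial)
        = (∑ m ∈ Finset.range (j+1),
            S1 j m * (lam:ℂ)^(j-m) * (((Complex.I*y)^m + (-(Complex.I*y))^m)/2)) / j.factorial := by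
      rw [← add_div, ← Finset.sum_add_distrib, ← mul_div_assoc]
      congr 1
      rw [Finset.mul_sum]
      apply Finset.sum_congr rfl
      intro m _
      ring
    rw [hcomb]
    congr 1
    rw [evenOddSum j _ (by
      intro m hm
      have hoddm : Odd m := Nat.not_even_iff_odd.mp hm
      rw [hoddm.neg_pow]
      simp)]
    apply Finset.sum_congr rfl
    intro m _
    have hIpow : (Complex.I*(y:ℂ))^(2*m) = (-1:ℂ)^m * (y:ℂ)^(2*m) := by
      rw [pow_mul, show (Complex.I*(y:ℂ))^2 = -1 * (y:ℂ)^2 by rw [mul_pow, Complex.I_sq],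
        mul_pow, pow_mul]
    have hneg : (-(Complex.I*(y:ℂ)))^(2*m) = (Complex.I*(y:ℂ))^(2*m) :=
      Even.neg_pow (even_two_mul m) _
    rw [hneg, hIpow]
    ring
  -- T vanishes below k
  have hXdvd : (PowerSeries.X : PowerSeries ℂ) ^ k ∣ PowerSeries.C (R := ℂ) (k.factorial) * egf T := by
    rw [← hT]
    refine dvd_mul_of_dvd_left (pow_dvd_pow_of_dvd (PowerSeries.X_dvd_iff.mpr ?_) k) _
    rw [map_sub, constCoeff_degExp, constCoeff_degExp]
    ring
  have hT0 : ∀ p, p < k → T p = 0 := by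
    intro p hp
    have hz := PowerSeries.X_pow_dvd_iff.mp hXdvd p hp
    rw [PowerSeries.coeff_C_mul, coeff_egf] at hz
    have h1 := factc_ne k
    have h2 := factc_ne p
    field_simp at hz
    rcases mul_eq_zero.mp (hz.trans (mul_zero _)) with h | h
    · exact absurd h h1
    · exact h
  -- main coefficient identity
  rw [hT, mul_assoc] at hBc
  have hmain := congrArg (PowerSeries.coeff (R := ℂ) (n+k)) hBc
  rw [PowerSeries.coeff_X_pow_mul, coeff_egf, PowerSeries.coeff_C_mul, PowerSeries.coeff_mul,
    Finset.Nat.sum_antidiagonal_eq_sum_range_succ_mk] at hmain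
  have hrefl : ∑ p ∈ Finset.range (n+k+1),
        PowerSeries.coeff (R := ℂ) p (egf T) * PowerSeries.coeff (R := ℂ) (n+k-p) (degCos lam y)
      = ∑ j ∈ Finset.range (n+k+1),
        PowerSeries.coeff (R := ℂ) (n+k-j) (egf T) * PowerSeries.coeff (R := ℂ) (n+k-(n+k-j)) (degCos lam y) :=
    (Finset.sum_range_reflect
      (fun p => PowerSeries.coeff (R := ℂ) p (egf T) * PowerSeries.coeff (R := ℂ) (n+k-p) (degCos lam y))
      (n+k+1)).symm
  rw [hrefl] at hmain
  have hsub : ∑ j ∈ Finset.range (n+k+1),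
        PowerSeries.coeff (R := ℂ) (n+k-j) (egf T) * PowerSeries.coeff (R := ℂ) (n+k-(n+k-j)) (degCos lam y)
      = ∑ j ∈ Finset.range (n+1),
        PowerSeries.coeff (R := ℂ) (n+k-j) (egf T) * PowerSeries.coeff (R := ℂ) (n+k-(n+k-j)) (degCos lam y) := by
    symm
    apply Finset.sum_subset (Finset.range_subset_range.mpr (by omega))
    intro j hj hj'
    simp only [Finset.mem_range] at hj hj'
    rw [coeff_egf, hT0 (n+k-j) (by omega), zero_div, zero_mul]
  rw [hsub] at hmain
  rw [div_eq_iff (factc_ne n)] at hmain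
  rw [hmain, Finset.mul_sum, Finset.sum_mul]
  apply Finset.sum_congr rfl
  intro j hj
  have hjn : j ≤ n := by have := Finset.mem_range.mp hj; omega
  have hidx : n + k - (n + k - j) = j := Nat.sub_sub_self (by omega)
  have hidx2 : n - j + k = n + k - j := by omega
  rw [hidx, coeff_egf, hcos j, hidx2]
  -- pull out constants on the RHS
  rw [show ∑ m ∈ Finset.range (j/2+1),
        ((n.choose j : ℂ) / ((n+k-j).choose k : ℂ)) * T (n+k-j) * (-1)^m * (y:ℂ)^(2*m) *
          (lam:ℂ)^(j-2*m) * S1 j (2*m)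
      = ((n.choose j : ℂ) / ((n+k-j).choose k : ℂ)) * T (n+k-j) *
          ∑ m ∈ Finset.range (j/2+1), (-1:ℂ)^m * (y:ℂ)^(2*m) * (lam:ℂ)^(j-2*m) * S1 j (2*m) by
    rw [Finset.mul_sum]
    apply Finset.sum_congr rfl
    intro m _
    ring]
  set N := n + k - j with hN
  set U := ∑ m ∈ Finset.range (j/2+1), (-1:ℂ)^m * (y:ℂ)^(2*m) * (lam:ℂ)^(j-2*m) * S1 j (2*m) with hU
  have hkN : k ≤ N := by omega
  have hsc : (k.factorial:ℂ) * n.factorial * (N.choose k) = (n.choose j) * N.factorial * j.factorial := by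
    have e1 := congrArg (Nat.cast : ℕ → ℂ) (Nat.choose_mul_factorial_mul_factorial hjn)
    have e2 := congrArg (Nat.cast : ℕ → ℂ) (Nat.choose_mul_factorial_mul_factorial hkN)
    push_cast at e1 e2
    have hNk : N - k = n - j := by omega
    rw [hNk] at e2
    linear_combination (-(k.factorial:ℂ)*(N.choose k))*e1 + ((n.choose j:ℂ)*j.factorial)*e2
  have hcNk : ((N.choose k : ℕ) : ℂ) ≠ 0 := Nat.cast_ne_zero.mpr (Nat.choose_pos hkN).ne'
  have hfN := factc_ne N
  have hfj := factc_ne j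
  field_simp
  linear_combination (T N * U) * hsc
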